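/- The set B_{m,n} = {u v : u ∈ U(m), v ∈ U(n)} of outer products is an orthogonal basis of V_{m,n}, the space of m×n real matrices with all row and column sums zero; in particular B_{m,n} has exactly (m-1)(n-1) distinct elements. -/

import Mathlib

open Finset


open Finset

/-- The vector `w(n)` (as a function of the index `i`): for odd `n`,
`w(n)_i = (n-1)/2` for even `i` and `-(n+1)/2` for odd `i` (as in Table 1 of the paper); `w(2) = (1,-1)`;
`w(4) = (1,-1,-1,1)`; for even `n = 2m > 4`, `w(n)_i = w(m)_{i mod m}`. -/
def w (n i : ℕ) : ℤ :=
  if h2 : n < 2 then 0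
  else if n = 2 then (if i = 0 then 1 else -1)
  else if n = 4 then (if i = 0 ∨ i = 3 then 1 else -1)
  else if n % 2 = 1 then (if i % 2 = 0 then ((n : ℤ) - 1) / 2 else -(((n : ℤ) + 1) / 2))
  else w (n / 2) (i % (n / 2))
termination_by n
decreasing_by omega

/-- Indices where `u` is positive. -/
def posIdx {n : ℕ} (u : Fin n → ℤ) : Finset (Fin n) :=
  Finset.univ.filter (fun i => 0 < u i)

/-- Indices where `u` is negative. -/
def negIdx {n : ℕ} (u : Fin n → ℤ) : Finset (Fin n) :=
  Finset.univ.filter (fun i => u i < 0)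

/-- The left child of a vertex labeled `u`: supported on the positive support
of `u`, with the `r`-th (in increasing index order) nonzero entry equal to
`w(a')_r` where `a'` is the size of the positive support. -/
def leftChild {n : ℕ} (u : Fin n → ℤ) : Fin n → ℤ := fun i =>
  if 0 < u i then w (posIdx u).card ((posIdx u).filter (fun j => j < i)).card else 0

/-- The right child of a vertex labeled `u`: supported on the negative support
of `u`, with the `r`-th nonzero entry equal to `w(a'')_r` where `a''` is the
size of the negative support. -/
def rightChild {n : ℕ} (u : Fin n → ℤ) : Fin n → ℤ := fun i =>
  if u i < 0 then w (negIdx u).card ((negIdx u).filter (fun j => j < i)).card else 0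

/-- Rooted binary trees with vertex labels in `α`. -/
inductive BT (α : Type) : Type where
  | node (label : α) (l r : Option (BT α)) : BT α

/-- Build the labeled tree below the vertex labeled `u` (with enough fuel this
is the tree described in the paper: a left child exists iff the positive
support has size at least `2`, a right child iff the negative support does). -/
def build (n : ℕ) : ℕ → (Fin n → ℤ) → BT (Fin n → ℤ)
  | 0, u => .node u none none
  | f + 1, u =>
    .node u
      (if 2 ≤ (posIdx u).card then some (build n f (leftChild u)) else none)
      (if 2 ≤ (negIdx u).card then some (build n f (rightChild u)) else none)

/-- The tree `T_n`, rooted at `w(n)`. (Fuel `n` suffices since the number of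
nonzero entries strictly decreases from parent to child.) -/
def T (n : ℕ) : BT (Fin n → ℤ) := build n n (fun i => w n i)

/-- The list of vertex labels of a tree in depth-first (preorder) order. -/
def labels {α : Type} : BT α → List α
  | .node a none none => [a]
  | .node a (some l) none => a :: labels l
  | .node a none (some r) => a :: labels r
  | .node a (some l) (some r) => a :: (labels l ++ labels r)

/-- A vertex label is skew-symmetric if its nonzero entries form the vector
`w(2) = (1,-1)`. -/
def IsSkew {n : ℕ} (u : Fin n → ℤ) : Prop :=
  ∃ i j : Fin n, i < j ∧ u i = 1 ∧ u j = -1 ∧ ∀ k, k ≠ i → k ≠ j → u k = 0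

instance {n : ℕ} (u : Fin n → ℤ) : Decidable (IsSkew u) := by
  unfold IsSkew; infer_instance

/-- The subspace of real `m × n` matrices with all row and column sums zero. -/
def V (m n : ℕ) : Submodule ℝ (Matrix (Fin m) (Fin n) ℝ) where
  carrier := {A | (∀ i, ∑ j, A i j = 0) ∧ (∀ j, ∑ i, A i j = 0)}
  zero_mem' := by simp
  add_mem' := by
    rintro A B ⟨hA1, hA2⟩ ⟨hB1, hB2⟩
    constructor <;> intro i <;>
      simp [Matrix.add_apply, Finset.sum_add_distrib, hA1, hA2, hB1, hB2]
  smul_mem' := by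
    rintro c A ⟨hA1, hA2⟩
    constructor <;> intro i <;>
      simp [Matrix.smul_apply, ← Finset.mul_sum, hA1, hA2]

/-- `B_{m,n}`, the set of outer products `u v` with `u ∈ U(m)`, `v ∈ U(n)`
(the vertex labels of `T_m` and `T_n`, viewed as real vectors). -/
def B (m n : ℕ) : Set (Matrix (Fin m) (Fin n) ℝ) :=
  {X | ∃ u ∈ labels (T m), ∃ v ∈ labels (T n),
    X = Matrix.vecMulVec (fun i => (u i : ℝ)) (fun j => (v j : ℝ))}


-- ===== auxiliary lemmas =====

theorem sumIf (x y : ℤ) (a : ℕ) :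
    ∑ i ∈ range a, (if i % 2 = 0 then x else y) = ((a+1)/2 : ℕ) * x + ((a/2 : ℕ)) * y := by
  induction a with
  | zero => simp
  | succ a ih =>
    rw [Finset.sum_range_succ, ih]
    rcases Nat.mod_two_eq_zero_or_one a with h0 | h0
    · have h1 : (a+1+1)/2 = a/2 + 1 := by omega
      have h2 : (a+1)/2 = a/2 := by omega
      rw [h0, h1, h2]; push_cast; ring
    · have h1 : (a+1+1)/2 = (a+1)/2 := by omega
      have h2 : (a+1)/2 = a/2 + 1 := by omega
      rw [h0, h1, h2]; push_cast; ring_nf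

theorem w2 (i : ℕ) : w 2 i = if i = 0 then 1 else -1 := by rw [w]; norm_num
theorem w4 (i : ℕ) : w 4 i = if i = 0 ∨ i = 3 then 1 else -1 := by rw [w]; norm_num

theorem Wlem : ∀ a : ℕ, 2 ≤ a → ∃ p q : ℤ, 0 < p ∧ q < 0 ∧
    (∀ i < a, w a i = p ∨ w a i = q) ∧ (∃ i < a, w a i = p) ∧ (∃ i < a, w a i = q) ∧
    ∑ i ∈ range a, w a i = 0 := by
  intro a
  induction a using Nat.strong_induction_on with
  | _ a IH =>
    intro ha
    rcases eq_or_ne a 2 with rfl | ha2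
    · refine ⟨1, -1, one_pos, by norm_num, ?_, ⟨0, by norm_num, by rw [w2]; norm_num⟩,
        ⟨1, by norm_num, by rw [w2]; norm_num⟩, ?_⟩
      · intro i hi; rw [w2]; split <;> simp
      · simp [Finset.sum_range_succ, w2]
    rcases eq_or_ne a 4 with rfl | ha4
    · refine ⟨1, -1, one_pos, by norm_num, ?_, ⟨0, by norm_num, by rw [w4]; norm_num⟩,
        ⟨1, by norm_num, by rw [w4]; norm_num⟩, ?_⟩
      · intro i hi; rw [w4]; split <;> simp
      · simp [Finset.sum_range_succ, w4]
    rcases Nat.mod_two_eq_zero_or_one a with hpar | hpar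
    · -- even, a ≥ 6
      have h6 : 6 ≤ a := by omega
      set m := a / 2 with hm
      have hma : a = m + m := by omega
      have hm2 : 2 ≤ m := by omega
      obtain ⟨p, q, hp, hq, hall, ⟨i1, hi1, hw1⟩, ⟨i2, hi2, hw2⟩, hsum⟩ := IH m (by omega) hm2
      have hunf : ∀ i, w a i = w m (i % m) := by
        intro i
        rw [w, dif_neg (by omega), if_neg ha2, if_neg ha4, if_neg (by omega), hm]
      refine ⟨p, q, hp, hq, ?_, ⟨i1, by omega, by rw [hunf, Nat.mod_eq_of_lt hi1]; exact hw1⟩,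
        ⟨i2, by omega, by rw [hunf, Nat.mod_eq_of_lt hi2]; exact hw2⟩, ?_⟩
      · intro i hi; rw [hunf]; exact hall _ (Nat.mod_lt _ (by omega))
      · calc ∑ i ∈ range a, w a i = ∑ i ∈ range (m+m), w m (i % m) := by
              rw [← hma]; exact Finset.sum_congr rfl fun i _ => hunf i
          _ = ∑ i ∈ range m, w m (i % m) + ∑ i ∈ range m, w m ((m + i) % m) :=
              Finset.sum_range_add _ m m
          _ = 0 := by
              have e1 : ∀ i ∈ range m, w m (i % m) = w m i := fun i hi => by
                rw [Nat.mod_eq_of_lt (mem_range.mp hi)]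
              have e2 : ∀ i ∈ range m, w m ((m + i) % m) = w m i := fun i hi => by
                rw [Nat.add_mod_left, Nat.mod_eq_of_lt (mem_range.mp hi)]
              rw [Finset.sum_congr rfl e1, Finset.sum_congr rfl e2, hsum]; ring
    · -- odd, a ≥ 3
      have h3 : 3 ≤ a := by omega
      set t := a / 2 with ht
      have hat : a = 2*t + 1 := by omega
      have ht1 : 1 ≤ t := by omega
      have hunf : ∀ i, w a i = if i % 2 = 0 then ((a : ℤ) - 1) / 2 else -(((a : ℤ) + 1) / 2) := by
        intro i
        rw [w, dif_neg (by omega), if_neg ha2, if_neg ha4, if_pos hpar]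
      have hp' : ((a : ℤ) - 1)/2 = t := by omega
      have hq' : ((a : ℤ) + 1)/2 = t + 1 := by omega
      refine ⟨t, -((t:ℤ)+1), by exact_mod_cast ht1, by omega, ?_, ?_, ?_, ?_⟩
      · intro i hi; rw [hunf, hp', hq']; split <;> simp
      · exact ⟨0, by omega, by rw [hunf, hp']; norm_num⟩
      · exact ⟨1, by omega, by rw [hunf, hq']; norm_num⟩
      · have e0 : ∑ i ∈ range a, w a i
            = ∑ i ∈ range a, (if i % 2 = 0 then ((t:ℤ)) else -((t:ℤ)+1)) := by
          refine Finset.sum_congr rfl fun i _ => ?_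
          rw [hunf, hp', hq']
        rw [e0, sumIf]
        have e1 : (a+1)/2 = t+1 := by omega
        have e2 : a/2 = t := by omega
        rw [e1, e2]; push_cast; ring

def supp {n : ℕ} (u : Fin n → ℤ) : Finset (Fin n) := univ.filter (fun i => u i ≠ 0)

def Good {n : ℕ} (u : Fin n → ℤ) : Prop :=
  ∃ p q : ℤ, 0 < p ∧ q < 0 ∧ (∀ i, u i = 0 ∨ u i = p ∨ u i = q) ∧
    (∃ i, u i = p) ∧ (∃ i, u i = q) ∧ ∑ i, u i = 0

theorem rank_lt {n : ℕ} (s : Finset (Fin n)) {i : Fin n} (hi : i ∈ s) :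
    (s.filter (fun j => j < i)).card < s.card := by
  have hsub : s.filter (fun j => j < i) ⊆ s.erase i := by
    intro j hj
    rw [mem_filter] at hj
    exact mem_erase.mpr ⟨ne_of_lt hj.2, hj.1⟩
  exact lt_of_le_of_lt (card_le_card hsub) (card_erase_lt_of_mem hi)

theorem rank_injOn {n : ℕ} (s : Finset (Fin n)) :
    Set.InjOn (fun i => (s.filter (fun j => j < i)).card) s := by
  have mono : ∀ i ∈ s, ∀ j ∈ s, i < j →
      (s.filter (fun k => k < i)).card < (s.filter (fun k => k < j)).card := by
    intro i hi j hj hij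
    apply card_lt_card
    constructor
    · intro k hk; rw [mem_filter] at *; exact ⟨hk.1, lt_trans hk.2 hij⟩
    · intro hcon
      have : i ∈ s.filter (fun k => k < i) := hcon (mem_filter.mpr ⟨hi, hij⟩)
      simp at this
  intro i hi j hj hij
  by_contra hne
  rcases lt_or_gt_of_ne hne with h | h
  · exact absurd hij (ne_of_lt (mono i hi j hj h))
  · exact absurd hij.symm (ne_of_lt (mono j hj i hi h))

theorem rank_image {n : ℕ} (s : Finset (Fin n)) :
    s.image (fun i => (s.filter (fun j => j < i)).card) = range s.card := by
  apply Finset.eq_of_subset_of_card_le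
  · intro r hr
    rw [mem_image] at hr
    obtain ⟨i, hi, rfl⟩ := hr
    exact mem_range.mpr (rank_lt s hi)
  · rw [card_range, Finset.card_image_of_injOn (rank_injOn s)]

theorem child_good {n : ℕ} (s : Finset (Fin n)) (hs : 2 ≤ s.card) (v : Fin n → ℤ)
    (hv : ∀ i, v i = if i ∈ s then w s.card ((s.filter (fun j => j < i)).card) else 0) :
    Good v ∧ supp v = s := by
  obtain ⟨p, q, hp, hq, hall, ⟨r1, hr1, hw1⟩, ⟨r2, hr2, hw2⟩, hsum⟩ := Wlem s.card hs
  have hval : ∀ i ∈ s, v i = p ∨ v i = q := by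
    intro i hi
    rw [hv, if_pos hi]
    exact hall _ (rank_lt s hi)
  have hex : ∀ r < s.card, ∃ i ∈ s, v i = w s.card r := by
    intro r hr
    have : r ∈ s.image (fun i => (s.filter (fun j => j < i)).card) := by
      rw [rank_image]; exact mem_range.mpr hr
    rw [mem_image] at this
    obtain ⟨i, hi, hri⟩ := this
    exact ⟨i, hi, by rw [hv, if_pos hi, hri]⟩
  have hsupp : supp v = s := by
    ext i
    simp only [supp, mem_filter, mem_univ, true_and]
    constructor
    · intro h; by_contra hi; rw [hv, if_neg hi] at h; exact h rfl
    · intro hi; rcases hval i hi with h | h <;> rw [h] <;> omega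
  refine ⟨⟨p, q, hp, hq, ?_, ?_, ?_, ?_⟩, hsupp⟩
  · intro i
    by_cases hi : i ∈ s
    · rcases hval i hi with h | h <;> simp [h]
    · rw [hv, if_neg hi]; left; rfl
  · obtain ⟨i, hi, h⟩ := hex r1 hr1; exact ⟨i, by rw [h, hw1]⟩
  · obtain ⟨i, hi, h⟩ := hex r2 hr2; exact ⟨i, by rw [h, hw2]⟩
  · have h0 : ∑ i : Fin n, v i = ∑ i ∈ s, v i := by
      symm
      apply Finset.sum_subset (subset_univ s)
      intro x _ hx; rw [hv, if_neg hx]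
    rw [h0]
    have h1 : ∑ i ∈ s, v i = ∑ i ∈ s, w s.card ((s.filter (fun j => j < i)).card) :=
      Finset.sum_congr rfl fun i hi => by rw [hv, if_pos hi]
    rw [h1, ← Finset.sum_image (fun i hi j hj h => rank_injOn s hi hj h), rank_image]
    exact hsum

theorem build_zero (n : ℕ) (u : Fin n → ℤ) : build n 0 u = .node u none none := rfl
theorem build_succ (n f : ℕ) (u : Fin n → ℤ) : build n (f+1) u = .node u
      (if 2 ≤ (posIdx u).card then some (build n f (leftChild u)) else none)
      (if 2 ≤ (negIdx u).card then some (build n f (rightChild u)) else none) := rfl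
theorem labels_nn {α : Type} (a : α) : labels (.node a none none) = [a] := rfl
theorem labels_sn {α : Type} (a : α) (l : BT α) :
    labels (.node a (some l) none) = a :: labels l := rfl
theorem labels_ns {α : Type} (a : α) (r : BT α) :
    labels (.node a none (some r)) = a :: labels r := rfl
theorem labels_ss {α : Type} (a : α) (l r : BT α) :
    labels (.node a (some l) (some r)) = a :: (labels l ++ labels r) := rfl

theorem left_good {n : ℕ} (u : Fin n → ℤ) (h : 2 ≤ (posIdx u).card) :
    Good (leftChild u) ∧ supp (leftChild u) = posIdx u := by
  apply child_good _ h
  intro i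
  simp only [leftChild, posIdx, mem_filter, mem_univ, true_and]

theorem right_good {n : ℕ} (u : Fin n → ℤ) (h : 2 ≤ (negIdx u).card) :
    Good (rightChild u) ∧ supp (rightChild u) = negIdx u := by
  apply child_good _ h
  intro i
  simp only [rightChild, negIdx, mem_filter, mem_univ, true_and]

theorem orth_of_const {n : ℕ} (u v : Fin n → ℤ) (p : ℤ) (h : ∀ i, v i ≠ 0 → u i = p)
    (hv : ∑ i, v i = 0) : ∑ i, u i * v i = 0 := by
  have e : ∀ i : Fin n, u i * v i = p * v i := by
    intro i
    by_cases hvi : v i = 0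
    · rw [hvi]; ring
    · rw [h i hvi]
  rw [Finset.sum_congr rfl fun i _ => e i, ← Finset.mul_sum, hv, mul_zero]

theorem mem_supp {n : ℕ} {u : Fin n → ℤ} {i : Fin n} : i ∈ supp u ↔ u i ≠ 0 := by
  simp [supp]
theorem mem_posIdx {n : ℕ} {u : Fin n → ℤ} {i : Fin n} : i ∈ posIdx u ↔ 0 < u i := by
  simp [posIdx]
theorem mem_negIdx {n : ℕ} {u : Fin n → ℤ} {i : Fin n} : i ∈ negIdx u ↔ u i < 0 := by
  simp [negIdx]

theorem build_main (n : ℕ) : ∀ (f : ℕ) (u : Fin n → ℤ), Good u →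
    (∀ v ∈ labels (build n f u), Good v ∧ supp v ⊆ supp u) ∧
    List.Pairwise (fun x y => ∑ i, x i * y i = 0) (labels (build n f u)) := by
  intro f
  induction f with
  | zero =>
    intro u hu
    constructor
    · intro v hv
      rw [build_zero, labels_nn] at hv
      rw [List.mem_singleton] at hv
      subst hv; exact ⟨hu, subset_rfl⟩
    · rw [build_zero, labels_nn]; simp
  | succ f ih =>
    intro u hu
    obtain ⟨p, q, hp, hq, hall, hep, heq, hsum⟩ := hu
    have hupos : ∀ i, 0 < u i → u i = p := by
      intro i hi; rcases hall i with h | h | h <;> omega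
    have huneg : ∀ i, u i < 0 → u i = q := by
      intro i hi; rcases hall i with h | h | h <;> omega
    have hgood : Good u := ⟨p, q, hp, hq, hall, hep, heq, hsum⟩
    have orthL : ∀ v : Fin n → ℤ, Good v → supp v ⊆ posIdx u → ∑ i, u i * v i = 0 := by
      intro v hv hsub
      obtain ⟨_, _, _, _, _, _, _, hvsum⟩ := hv
      exact orth_of_const u v p
        (fun i hi => hupos i (mem_posIdx.mp (hsub (mem_supp.mpr hi)))) hvsum
    have orthR : ∀ v : Fin n → ℤ, Good v → supp v ⊆ negIdx u → ∑ i, u i * v i = 0 := by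
      intro v hv hsub
      obtain ⟨_, _, _, _, _, _, _, hvsum⟩ := hv
      exact orth_of_const u v q
        (fun i hi => huneg i (mem_negIdx.mp (hsub (mem_supp.mpr hi)))) hvsum
    have orthLR : ∀ x y : Fin n → ℤ, supp x ⊆ posIdx u → supp y ⊆ negIdx u →
        ∑ i, x i * y i = 0 := by
      intro x y hx hy
      apply Finset.sum_eq_zero
      intro i _
      by_cases hxi : x i = 0
      · rw [hxi, zero_mul]
      · have h1 : 0 < u i := mem_posIdx.mp (hx (mem_supp.mpr hxi))
        have h2 : y i = 0 := by
          by_contra hyi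
          have := mem_negIdx.mp (hy (mem_supp.mpr hyi))
          omega
        rw [h2, mul_zero]
    have hposs : posIdx u ⊆ supp u := by
      intro i hi; rw [mem_posIdx] at hi; rw [mem_supp]; omega
    have hnegs : negIdx u ⊆ supp u := by
      intro i hi; rw [mem_negIdx] at hi; rw [mem_supp]; omega
    by_cases hL : 2 ≤ (posIdx u).card <;> by_cases hR : 2 ≤ (negIdx u).card
    · -- both children
      rw [build_succ, if_pos hL, if_pos hR, labels_ss]
      obtain ⟨hgl, hsl⟩ := left_good u hL
      obtain ⟨hgr, hsr⟩ := right_good u hR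
      obtain ⟨ihl1, ihl2⟩ := ih (leftChild u) hgl
      obtain ⟨ihr1, ihr2⟩ := ih (rightChild u) hgr
      have memL : ∀ v ∈ labels (build n f (leftChild u)), Good v ∧ supp v ⊆ posIdx u :=
        fun v hv => ⟨(ihl1 v hv).1, (ihl1 v hv).2.trans (le_of_eq hsl)⟩
      have memR : ∀ v ∈ labels (build n f (rightChild u)), Good v ∧ supp v ⊆ negIdx u :=
        fun v hv => ⟨(ihr1 v hv).1, (ihr1 v hv).2.trans (le_of_eq hsr)⟩
      constructor
      · intro v hv
        simp only [List.mem_cons, List.mem_append] at hv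
        rcases hv with rfl | hv | hv
        · exact ⟨hgood, subset_rfl⟩
        · exact ⟨(memL v hv).1, ((memL v hv).2.trans hposs)⟩
        · exact ⟨(memR v hv).1, ((memR v hv).2.trans hnegs)⟩
      · rw [List.pairwise_cons]
        constructor
        · intro v hv
          rw [List.mem_append] at hv
          rcases hv with hv | hv
          · exact orthL v (memL v hv).1 (memL v hv).2
          · exact orthR v (memR v hv).1 (memR v hv).2
        · rw [List.pairwise_append]
          exact ⟨ihl2, ihr2, fun x hx y hy => orthLR x y (memL x hx).2 (memR y hy).2⟩
    · -- left only
      rw [build_succ, if_pos hL, if_neg hR, labels_sn]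
      obtain ⟨hgl, hsl⟩ := left_good u hL
      obtain ⟨ihl1, ihl2⟩ := ih (leftChild u) hgl
      have memL : ∀ v ∈ labels (build n f (leftChild u)), Good v ∧ supp v ⊆ posIdx u :=
        fun v hv => ⟨(ihl1 v hv).1, (ihl1 v hv).2.trans (le_of_eq hsl)⟩
      constructor
      · intro v hv
        rcases List.mem_cons.mp hv with rfl | hv
        · exact ⟨hgood, subset_rfl⟩
        · exact ⟨(memL v hv).1, ((memL v hv).2.trans hposs)⟩
      · rw [List.pairwise_cons]
        exact ⟨fun v hv => orthL v (memL v hv).1 (memL v hv).2, ihl2⟩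
    · -- right only
      rw [build_succ, if_neg hL, if_pos hR, labels_ns]
      obtain ⟨hgr, hsr⟩ := right_good u hR
      obtain ⟨ihr1, ihr2⟩ := ih (rightChild u) hgr
      have memR : ∀ v ∈ labels (build n f (rightChild u)), Good v ∧ supp v ⊆ negIdx u :=
        fun v hv => ⟨(ihr1 v hv).1, (ihr1 v hv).2.trans (le_of_eq hsr)⟩
      constructor
      · intro v hv
        rcases List.mem_cons.mp hv with rfl | hv
        · exact ⟨hgood, subset_rfl⟩
        · exact ⟨(memR v hv).1, ((memR v hv).2.trans hnegs)⟩
      · rw [List.pairwise_cons]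
        exact ⟨fun v hv => orthR v (memR v hv).1 (memR v hv).2, ihr2⟩
    · -- no children
      rw [build_succ, if_neg hL, if_neg hR, labels_nn]
      constructor
      · intro v hv
        rcases List.mem_singleton.mp hv with rfl
        exact ⟨hgood, subset_rfl⟩
      · simp

theorem supp_card {n : ℕ} (u : Fin n → ℤ) :
    (supp u).card = (posIdx u).card + (negIdx u).card := by
  have he : supp u = posIdx u ∪ negIdx u := by
    ext i
    simp only [supp, posIdx, negIdx, mem_union, mem_filter, mem_univ, true_and]
    omega
  have hd : Disjoint (posIdx u) (negIdx u) := by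
    rw [Finset.disjoint_left]
    intro i h1 h2
    simp only [posIdx, negIdx, mem_filter, mem_univ, true_and] at h1 h2
    omega
  rw [he, card_union_of_disjoint hd]

theorem Good.pos_card {n : ℕ} {u : Fin n → ℤ} (hu : Good u) :
    1 ≤ (posIdx u).card ∧ 1 ≤ (negIdx u).card := by
  obtain ⟨p, q, hp, hq, _, ⟨i, hi⟩, ⟨j, hj⟩, _⟩ := hu
  constructor
  · exact card_pos.mpr ⟨i, by simp [posIdx]; omega⟩
  · exact card_pos.mpr ⟨j, by simp [negIdx]; omega⟩

theorem build_len (n : ℕ) : ∀ (f : ℕ) (u : Fin n → ℤ), Good u → (supp u).card ≤ f + 1 →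
    (labels (build n f u)).length = (supp u).card - 1 := by
  intro f
  induction f with
  | zero =>
    intro u hu hle
    obtain ⟨h1, h2⟩ := hu.pos_card
    rw [supp_card] at hle
    omega
  | succ f ih =>
    intro u hu hle
    obtain ⟨h1, h2⟩ := hu.pos_card
    rw [supp_card] at hle ⊢
    by_cases hL : 2 ≤ (posIdx u).card <;> by_cases hR : 2 ≤ (negIdx u).card
    · obtain ⟨hgl, hsl⟩ := left_good u hL
      obtain ⟨hgr, hsr⟩ := right_good u hR
      rw [build_succ, if_pos hL, if_pos hR, labels_ss]
      rw [List.length_cons, List.length_append,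
        ih _ hgl (by rw [hsl]; omega), ih _ hgr (by rw [hsr]; omega), hsl, hsr]
      omega
    · obtain ⟨hgl, hsl⟩ := left_good u hL
      rw [build_succ, if_pos hL, if_neg hR, labels_sn]
      rw [List.length_cons, ih _ hgl (by rw [hsl]; omega), hsl]
      omega
    · obtain ⟨hgr, hsr⟩ := right_good u hR
      rw [build_succ, if_neg hL, if_pos hR, labels_ns]
      rw [List.length_cons, ih _ hgr (by rw [hsr]; omega), hsr]
      omega
    · rw [build_succ, if_neg hL, if_neg hR, labels_nn]
      simp; omega

theorem root_good (n : ℕ) (hn : 2 ≤ n) :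
    Good (fun i : Fin n => w n i) ∧ supp (fun i : Fin n => w n i) = univ := by
  obtain ⟨p, q, hp, hq, hall, ⟨i1, hi1, hw1⟩, ⟨i2, hi2, hw2⟩, hsum⟩ := Wlem n hn
  have hall' : ∀ i : Fin n, w n i = p ∨ w n i = q := fun i => hall i i.isLt
  refine ⟨⟨p, q, hp, hq, fun i => Or.inr (hall' i), ⟨⟨i1, hi1⟩, hw1⟩, ⟨⟨i2, hi2⟩, hw2⟩, ?_⟩, ?_⟩
  · rw [Fin.sum_univ_eq_sum_range (fun i => w n i) n]; exact hsum
  · ext i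
    rw [mem_supp]
    simp only [mem_univ, iff_true]
    rcases hall' i with h | h <;> rw [h] <;> omega

theorem T_main (k : ℕ) (hk : 2 ≤ k) :
    (labels (T k)).length = k - 1 ∧ (labels (T k)).Nodup ∧
    (∀ u ∈ labels (T k), (∑ i, u i = 0) ∧ 0 < ∑ i, u i * u i) ∧
    (∀ u ∈ labels (T k), ∀ v ∈ labels (T k), u ≠ v → ∑ i, u i * v i = 0) := by
  obtain ⟨hg, hs⟩ := root_good k hk
  obtain ⟨hmem, hpw⟩ := build_main k k _ hg
  have hlen : (labels (T k)).length = k - 1 := by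
    have := build_len k k _ hg (by rw [hs, card_univ, Fintype.card_fin]; omega)
    rwa [hs, card_univ, Fintype.card_fin] at this
  have hself : ∀ u ∈ labels (T k), 0 < ∑ i, u i * u i := by
    intro u hu
    obtain ⟨⟨p, q, hp, hq, hall, ⟨i, hi⟩, _, _⟩, _⟩ := hmem u hu
    have h1 : (0:ℤ) < u i * u i := by rw [hi]; positivity
    have h2 : ∀ j : Fin k, j ∈ univ → (0:ℤ) ≤ u j * u j := fun j _ => mul_self_nonneg _
    exact lt_of_lt_of_le h1 (Finset.single_le_sum h2 (mem_univ i))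
  have hpair : ∀ u ∈ labels (T k), ∀ v ∈ labels (T k), u ≠ v → ∑ i, u i * v i = 0 := by
    have hsymm : Symmetric (fun x y : Fin k → ℤ => ∑ i, x i * y i = 0) := by
      intro x y h
      rw [← h]
      exact Finset.sum_congr rfl fun i _ => mul_comm _ _
    haveI : Std.Symm (fun x y : Fin k → ℤ => ∑ i, x i * y i = 0) := ⟨fun a b h => hsymm h⟩
    exact fun u hu v hv huv => hpw.forall hu hv huv
  refine ⟨hlen, ?_, fun u hu => ⟨(hmem u hu).1.choose_spec.choose_spec.2.2.2.2.2, hself u hu⟩, hpair⟩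
  have : List.Pairwise (fun x y : Fin k → ℤ => x ≠ y) (labels (T k)) := by
    refine hpw.imp_of_mem ?_
    intro a b ha hb hab
    intro hEq
    subst hEq
    exact absurd hab (ne_of_gt (hself a ha))
  exact this

/-- The Frobenius pairing with a fixed matrix `Y`, as a linear map. -/
def fro (m n : ℕ) (Y : Matrix (Fin m) (Fin n) ℝ) :
    Matrix (Fin m) (Fin n) ℝ →ₗ[ℝ] ℝ where
  toFun X := ∑ i, ∑ j, X i j * Y i j
  map_add' A B := by
    simp [Matrix.add_apply, add_mul, Finset.sum_add_distrib]
  map_smul' c A := by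
    simp [Matrix.smul_apply, smul_eq_mul, Finset.mul_sum, mul_assoc]

/-- `B_{m,n}` is an orthogonal basis of `V_{m,n}` with exactly
`(m-1)(n-1)` distinct elements. -/
theorem stmt12 (m n : ℕ) (hm : 2 ≤ m) (hn : 2 ≤ n) :
    (B m n).ncard = (m - 1) * (n - 1) ∧
    (∀ X ∈ B m n, X ∈ V m n) ∧
    (∀ X ∈ B m n, ∀ Y ∈ B m n, X ≠ Y →
      ∑ i : Fin m, ∑ j : Fin n, X i j * Y i j = 0) ∧
    LinearIndependent ℝ (Subtype.val : B m n → Matrix (Fin m) (Fin n) ℝ) ∧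
    Submodule.span ℝ (B m n) = V m n := by
  obtain ⟨m', rfl⟩ : ∃ m', m = m' + 1 := ⟨m - 1, by omega⟩
  obtain ⟨n', rfl⟩ : ∃ n', n = n' + 1 := ⟨n - 1, by omega⟩
  set m := m' + 1
  set n := n' + 1
  obtain ⟨len1, nd1, good1, orth1⟩ := T_main m hm
  obtain ⟨len2, nd2, good2, orth2⟩ := T_main n hn
  set F : (Fin m → ℤ) × (Fin n → ℤ) → Matrix (Fin m) (Fin n) ℝ :=
    fun z => Matrix.vecMulVec (fun i => ((z.1 i : ℝ))) (fun j => ((z.2 j : ℝ))) with hFdef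
  have hmemB : ∀ X, X ∈ B m n ↔ ∃ u ∈ labels (T m), ∃ v ∈ labels (T n), X = F (u, v) := by
    intro X; rfl
  have hF : ∀ z z' : (Fin m → ℤ) × (Fin n → ℤ),
      (∑ i, ∑ j, F z i j * F z' i j)
        = (∑ i, ((z.1 i : ℝ) * (z'.1 i : ℝ))) * (∑ j, ((z.2 j : ℝ) * (z'.2 j : ℝ))) := by
    intro z z'
    rw [Finset.sum_mul_sum]
    refine Finset.sum_congr rfl fun i _ => Finset.sum_congr rfl fun j _ => ?_
    simp only [hFdef, Matrix.vecMulVec_apply]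
    ring
  -- real versions of the integer facts
  have ro1 : ∀ u ∈ labels (T m), ∀ v ∈ labels (T m), u ≠ v →
      (∑ i, ((u i : ℝ) * (v i : ℝ))) = 0 := by
    intro u hu v hv huv
    have h : ((∑ i, u i * v i : ℤ) : ℝ) = 0 := by rw [orth1 u hu v hv huv]; simp
    push_cast at h; exact h
  have ro2 : ∀ u ∈ labels (T n), ∀ v ∈ labels (T n), u ≠ v →
      (∑ i, ((u i : ℝ) * (v i : ℝ))) = 0 := by
    intro u hu v hv huv
    have h : ((∑ i, u i * v i : ℤ) : ℝ) = 0 := by rw [orth2 u hu v hv huv]; simp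
    push_cast at h; exact h
  have rs1 : ∀ u ∈ labels (T m), (∑ i, (u i : ℝ)) = 0 := by
    intro u hu
    have h : ((∑ i, u i : ℤ) : ℝ) = 0 := by rw [(good1 u hu).1]; simp
    push_cast at h; exact h
  have rs2 : ∀ u ∈ labels (T n), (∑ i, (u i : ℝ)) = 0 := by
    intro u hu
    have h : ((∑ i, u i : ℤ) : ℝ) = 0 := by rw [(good2 u hu).1]; simp
    push_cast at h; exact h
  have rp1 : ∀ u ∈ labels (T m), 0 < ∑ i, ((u i : ℝ) * (u i : ℝ)) := by
    intro u hu
    have h : (0 : ℝ) < ((∑ i, u i * u i : ℤ) : ℝ) := by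
      exact_mod_cast (good1 u hu).2
    push_cast at h; exact h
  have rp2 : ∀ u ∈ labels (T n), 0 < ∑ i, ((u i : ℝ) * (u i : ℝ)) := by
    intro u hu
    have h : (0 : ℝ) < ((∑ i, u i * u i : ℤ) : ℝ) := by
      exact_mod_cast (good2 u hu).2
    push_cast at h; exact h
  have innerFF : ∀ z z' : (Fin m → ℤ) × (Fin n → ℤ),
      z.1 ∈ labels (T m) → z.2 ∈ labels (T n) → z'.1 ∈ labels (T m) → z'.2 ∈ labels (T n) →
      z ≠ z' → ∑ i, ∑ j, F z i j * F z' i j = 0 := by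
    intro z z' h1 h2 h3 h4 hne
    rw [hF]
    rcases eq_or_ne z.1 z'.1 with he | he
    · have hv : z.2 ≠ z'.2 := by
        intro hc; exact hne (Prod.ext he hc)
      rw [ro2 z.2 h2 z'.2 h4 hv, mul_zero]
    · rw [ro1 z.1 h1 z'.1 h3 he, zero_mul]
  have innerPos : ∀ z : (Fin m → ℤ) × (Fin n → ℤ),
      z.1 ∈ labels (T m) → z.2 ∈ labels (T n) →
      0 < ∑ i, ∑ j, F z i j * F z i j := by
    intro z h1 h2
    rw [hF]
    exact mul_pos (rp1 z.1 h1) (rp2 z.2 h2)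
  -- part 2 : B ⊆ V
  have memV : ∀ X ∈ B m n, X ∈ V m n := by
    intro X hX
    obtain ⟨u, hu, v, hv, rfl⟩ := (hmemB X).mp hX
    constructor
    · intro i
      have : ∀ j, F (u, v) i j = (u i : ℝ) * (v j : ℝ) := fun j => rfl
      rw [Finset.sum_congr rfl fun j _ => this j, ← Finset.mul_sum, rs2 v hv, mul_zero]
    · intro j
      have : ∀ i, F (u, v) i j = (v j : ℝ) * (u i : ℝ) := fun i => mul_comm _ _
      rw [Finset.sum_congr rfl fun i _ => this i, ← Finset.mul_sum, rs1 u hu, mul_zero]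
  -- part 3 : orthogonality
  have orthB : ∀ X ∈ B m n, ∀ Y ∈ B m n, X ≠ Y →
      ∑ i, ∑ j, X i j * Y i j = 0 := by
    intro X hX Y hY hXY
    obtain ⟨u, hu, v, hv, rfl⟩ := (hmemB X).mp hX
    obtain ⟨u', hu', v', hv', rfl⟩ := (hmemB Y).mp hY
    refine innerFF (u, v) (u', v') hu hv hu' hv' ?_
    intro hc; exact hXY (congrArg F hc)
  -- injectivity of F on pairs of labels
  have injF : ∀ z z' : (Fin m → ℤ) × (Fin n → ℤ),
      z.1 ∈ labels (T m) → z.2 ∈ labels (T n) → z'.1 ∈ labels (T m) → z'.2 ∈ labels (T n) →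
      F z = F z' → z = z' := by
    intro z z' h1 h2 h3 h4 he
    by_contra hne
    have h0 := innerFF z z' h1 h2 h3 h4 hne
    rw [← he] at h0
    exact absurd h0 (ne_of_gt (innerPos z h1 h2))
  -- the finset picture
  classical
  set Bfin : Finset (Matrix (Fin m) (Fin n) ℝ) :=
    ((labels (T m)).toFinset ×ˢ (labels (T n)).toFinset).image F with hBfin
  have hBeq : B m n = ↑Bfin := by
    ext X
    rw [hmemB]
    simp only [hBfin, Finset.coe_image, Set.mem_image, Finset.mem_coe, Finset.mem_product,
      List.mem_toFinset]
    constructor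
    · rintro ⟨u, hu, v, hv, rfl⟩
      exact ⟨(u, v), ⟨hu, hv⟩, rfl⟩
    · rintro ⟨⟨u, v⟩, ⟨hu, hv⟩, rfl⟩
      exact ⟨u, hu, v, hv, rfl⟩
  have hcard : Bfin.card = (m - 1) * (n - 1) := by
    rw [hBfin, Finset.card_image_of_injOn, Finset.card_product,
      List.toFinset_card_of_nodup nd1, List.toFinset_card_of_nodup nd2, len1, len2]
    intro z hz z' hz' he
    rw [Finset.mem_coe, Finset.mem_product, List.mem_toFinset, List.mem_toFinset] at hz hz'
    exact injF z z' hz.1 hz.2 hz'.1 hz'.2 he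
  have hncard : (B m n).ncard = (m - 1) * (n - 1) := by
    rw [hBeq, Set.ncard_coe_finset, hcard]
  -- part 4 : linear independence
  have hLI : LinearIndependent ℝ (Subtype.val : B m n → Matrix (Fin m) (Fin n) ℝ) := by
    rw [linearIndependent_iff']
    intro s g hsum x0 hx0
    have h := congrArg (fro m n (x0 : Matrix (Fin m) (Fin n) ℝ)) hsum
    rw [map_sum, map_zero] at h
    simp only [map_smul, smul_eq_mul] at h
    rw [Finset.sum_eq_single x0] at h
    · have hpos : 0 < fro m n (x0 : Matrix (Fin m) (Fin n) ℝ) (x0 : Matrix (Fin m) (Fin n) ℝ) := by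
        obtain ⟨u, hu, v, hv, hx⟩ := (hmemB _).mp x0.2
        show 0 < ∑ i, ∑ j, (x0 : Matrix (Fin m) (Fin n) ℝ) i j * (x0 : Matrix (Fin m) (Fin n) ℝ) i j
        rw [hx]
        exact innerPos (u, v) hu hv
      exact (mul_eq_zero.mp h).resolve_right (ne_of_gt hpos)
    · intro b hb hbne
      have hzero : fro m n (x0 : Matrix (Fin m) (Fin n) ℝ) (b : Matrix (Fin m) (Fin n) ℝ) = 0 := by
        show ∑ i, ∑ j, (b : Matrix (Fin m) (Fin n) ℝ) i j * (x0 : Matrix (Fin m) (Fin n) ℝ) i j = 0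
        exact orthB _ b.2 _ x0.2 (fun hc => hbne (Subtype.ext hc))
      rw [hzero, mul_zero]
    · intro hc; exact absurd hx0 hc
  -- dimension bounds
  have hfin : (B m n).Finite := by rw [hBeq]; exact Bfin.finite_toSet
  haveI : Fintype ↑(B m n) := hfin.fintype
  have hrank_span : Module.finrank ℝ ↥(Submodule.span ℝ (B m n)) = (m - 1) * (n - 1) := by
    rw [finrank_span_set_eq_card hLI, ← Set.ncard_eq_toFinset_card', hncard]
  have hle : Submodule.span ℝ (B m n) ≤ V m n := Submodule.span_le.mpr memV
  -- finrank of V is at most (m-1)(n-1)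
  have hVle : Module.finrank ℝ ↥(V m n) ≤ (m - 1) * (n - 1) := by
    let Lmap : Matrix (Fin m) (Fin n) ℝ →ₗ[ℝ] Matrix (Fin m') (Fin n') ℝ :=
      { toFun := fun A => Matrix.of fun i j => A i.castSucc j.castSucc
        map_add' := fun _ _ => rfl
        map_smul' := fun _ _ => rfl }
    have hinj : Function.Injective (Lmap.comp (V m n).subtype) := by
      rw [← LinearMap.ker_eq_bot, Submodule.eq_bot_iff]
      rintro ⟨A, hA1, hA2⟩ hker
      rw [LinearMap.mem_ker] at hker
      have hz : ∀ (i : Fin m') (j : Fin n'), A i.castSucc j.castSucc = 0 := by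
        intro i j
        exact congrFun (congrFun hker i) j
      have hrow : ∀ (i : Fin m') (j : Fin n), A i.castSucc j = 0 := by
        intro i j
        induction j using Fin.lastCases with
        | last =>
          have h := hA1 i.castSucc
          rw [Fin.sum_univ_castSucc] at h
          rw [Finset.sum_congr rfl (fun j _ => hz i j), Finset.sum_const, smul_zero,
            zero_add] at h
          exact h
        | cast j => exact hz i j
      have hall : ∀ (i : Fin m) (j : Fin n), A i j = 0 := by
        intro i j
        induction i using Fin.lastCases with
        | last =>
          have h := hA2 j
          rw [Fin.sum_univ_castSucc] at h
          rw [Finset.sum_congr rfl (fun i _ => hrow i j), Finset.sum_const, smul_zero,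
            zero_add] at h
          exact h
        | cast i => exact hrow i j
      apply Subtype.ext
      ext i j
      exact hall i j
    have h1 := LinearMap.finrank_le_finrank_of_injective hinj
    have h2 : Module.finrank ℝ (Matrix (Fin m') (Fin n') ℝ) = m' * n' := by
      rw [Module.finrank_matrix]
      simp
    rw [h2] at h1
    have e1 : m - 1 = m' := rfl
    have e2 : n - 1 = n' := rfl
    rw [e1, e2]
    exact h1
  have hspan : Submodule.span ℝ (B m n) = V m n := by
    apply Submodule.eq_of_le_of_finrank_le hle
    rw [hrank_span]
    exact hVle
  exact ⟨hncard, memV, orthB, hLI, hspan⟩
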